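/- Region-growing lemma, complementary-volume bound: in the region-growing setup (edge version), for all real numbers 0 ≤ a < b one has ∫_a^b c(∂F(ρ)) / ( cVol(ρ) · ln( e·cVol(a) / cVol(ρ) ) ) dρ ≤ ln ln( e·cVol(a) / cVol(b) ). Equivalently, if ρ is chosen uniformly at random from [a,b), then E_ρ[ c(∂F(ρ)) / ( cVol(ρ)·ln(e·cVol(a)/cVol(ρ)) ) ] ≤ (1/(b−a))·ln ln( e·cVol(a)/cVol(b) ). -/

import Mathlib

open scoped Classical

namespace RegionGrow

variable {V : Type*}

/-- The ball `B^S_ℓ(z,ρ)`: vertices of `S` at `ℓ`-distance at most `ρ` from `z`. -/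
noncomputable def ball (ℓ : V → V → ℝ) (S : Finset V) (z : V) (ρ : ℝ) : Finset V :=
  S.filter fun v => ℓ z v ≤ ρ

/-- The boundary `∂^{S,F}_ℓ(z,ρ)`: edges of `F` with both endpoints in `S`, exactly one
of which lies in the ball of radius `ρ` around `z`. -/
noncomputable def bdry (ℓ : V → V → ℝ) (S : Finset V) (F : Finset (V × V)) (z : V) (ρ : ℝ) :
    Finset (V × V) :=
  F.filter fun p => p.1 ∈ S ∧ p.2 ∈ S ∧ ¬ ((ℓ z p.1 ≤ ρ) ↔ (ℓ z p.2 ≤ ρ))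

/-- The volume `𝒱^{S,F}_ℓ(β; z, ρ)`.  For a crossing edge, the endpoint inside the ball
is the one closer to `z`, so its distance to `z` is `min (ℓ z u) (ℓ z v)`. -/
noncomputable def vol (c : V × V → ℝ) (ℓ : V → V → ℝ) (S : Finset V) (F : Finset (V × V))
    (z : V) (β ρ : ℝ) : ℝ :=
  β + ∑ p ∈ F.filter (fun p => p.1 ∈ ball ℓ S z ρ ∧ p.2 ∈ ball ℓ S z ρ), c p * ℓ p.1 p.2
    + ∑ p ∈ bdry ℓ S F z ρ, c p * (ρ - min (ℓ z p.1) (ℓ z p.2))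

/-- The complementary volume `𝒱̄^{S,F}_ℓ(β; z, ρ)`.  For a crossing edge, the endpoint
outside the ball is the one farther from `z`, at distance `max (ℓ z u) (ℓ z v)`. -/
noncomputable def cvol (c : V × V → ℝ) (ℓ : V → V → ℝ) (S : Finset V) (F : Finset (V × V))
    (z : V) (β ρ : ℝ) : ℝ :=
  β + ∑ p ∈ F.filter
        (fun p => p.1 ∈ S ∧ p.1 ∉ ball ℓ S z ρ ∧ p.2 ∈ S ∧ p.2 ∉ ball ℓ S z ρ),
        c p * ℓ p.1 p.2
    + ∑ p ∈ bdry ℓ S F z ρ, c p * (max (ℓ z p.1) (ℓ z p.2) - ρ)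

section Aux

variable (c : V × V → ℝ) (ℓ : V → V → ℝ) (S : Finset V) (F : Finset (V × V)) (z : V) (β : ℝ)

/-- per-edge weight -/
noncomputable def w (p : V × V) (ρ : ℝ) : ℝ :=
  if min (ℓ z p.1) (ℓ z p.2) ≤ ρ then
    (if max (ℓ z p.1) (ℓ z p.2) ≤ ρ then 0 else max (ℓ z p.1) (ℓ z p.2) - ρ)
  else ℓ p.1 p.2

set_option linter.unreachableTactic false
set_option linter.unusedTactic false

lemma bdry_eq (ρ : ℝ) :
    bdry ℓ S F z ρ = (F.filter fun p => p.1 ∈ S ∧ p.2 ∈ S).filter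
      (fun p => min (ℓ z p.1) (ℓ z p.2) ≤ ρ ∧ ¬ max (ℓ z p.1) (ℓ z p.2) ≤ ρ) := by
  rw [bdry, Finset.filter_filter]
  apply Finset.filter_congr
  intro p _
  simp only [min_le_iff, max_le_iff, not_and_or, not_le, and_assoc]
  constructor
  · rintro ⟨h1, h2, h3⟩
    refine ⟨h1, h2, ?_, ?_⟩ <;> by_cases hx : ℓ z p.1 ≤ ρ <;> by_cases hy : ℓ z p.2 ≤ ρ <;>
      simp_all <;> linarith
  · rintro ⟨h1, h2, h3, h4⟩
    refine ⟨h1, h2, ?_⟩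
    rcases h4 with h | h <;> rcases h3 with h' | h' <;> intro hiff <;>
      simp_all <;> linarith

lemma out_eq (ρ : ℝ) :
    F.filter (fun p => p.1 ∈ S ∧ p.1 ∉ ball ℓ S z ρ ∧ p.2 ∈ S ∧ p.2 ∉ ball ℓ S z ρ)
      = (F.filter fun p => p.1 ∈ S ∧ p.2 ∈ S).filter
        (fun p => ¬ min (ℓ z p.1) (ℓ z p.2) ≤ ρ) := by
  rw [Finset.filter_filter]
  apply Finset.filter_congr
  intro p _
  simp only [ball, Finset.mem_filter, not_and, not_le, min_le_iff, not_or]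
  constructor
  · rintro ⟨h1, h2, h3, h4⟩
    exact ⟨⟨h1, h3⟩, h2 h1, h4 h3⟩
  · rintro ⟨⟨h1, h2⟩, h3, h4⟩
    exact ⟨h1, fun _ => h3, h2, fun _ => h4⟩

lemma cvol_eq (ρ : ℝ) :
    cvol c ℓ S F z β ρ
      = β + ∑ p ∈ F.filter (fun p => p.1 ∈ S ∧ p.2 ∈ S), c p * w ℓ z p ρ := by
  classical
  set FS := F.filter (fun p => p.1 ∈ S ∧ p.2 ∈ S) with hFS
  have hA : ∑ p ∈ FS.filter (fun p => min (ℓ z p.1) (ℓ z p.2) ≤ ρ), c p * w ℓ z p ρ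
      + ∑ p ∈ FS.filter (fun p => ¬ min (ℓ z p.1) (ℓ z p.2) ≤ ρ), c p * w ℓ z p ρ
      = ∑ p ∈ FS, c p * w ℓ z p ρ :=
    Finset.sum_filter_add_sum_filter_not _ _ _
  have hB : ∑ p ∈ (FS.filter (fun p => min (ℓ z p.1) (ℓ z p.2) ≤ ρ)).filter
        (fun p => max (ℓ z p.1) (ℓ z p.2) ≤ ρ), c p * w ℓ z p ρ
      + ∑ p ∈ (FS.filter (fun p => min (ℓ z p.1) (ℓ z p.2) ≤ ρ)).filter
        (fun p => ¬ max (ℓ z p.1) (ℓ z p.2) ≤ ρ), c p * w ℓ z p ρ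
      = ∑ p ∈ FS.filter (fun p => min (ℓ z p.1) (ℓ z p.2) ≤ ρ), c p * w ℓ z p ρ :=
    Finset.sum_filter_add_sum_filter_not _ _ _
  have h0 : ∑ p ∈ (FS.filter (fun p => min (ℓ z p.1) (ℓ z p.2) ≤ ρ)).filter
        (fun p => max (ℓ z p.1) (ℓ z p.2) ≤ ρ), c p * w ℓ z p ρ = 0 := by
    apply Finset.sum_eq_zero
    intro p hp
    simp only [Finset.mem_filter] at hp
    rw [w, if_pos hp.1.2, if_pos hp.2, mul_zero]
  have hbd : ∑ p ∈ bdry ℓ S F z ρ, c p * (max (ℓ z p.1) (ℓ z p.2) - ρ)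
      = ∑ p ∈ (FS.filter (fun p => min (ℓ z p.1) (ℓ z p.2) ≤ ρ)).filter
        (fun p => ¬ max (ℓ z p.1) (ℓ z p.2) ≤ ρ), c p * w ℓ z p ρ := by
    rw [bdry_eq]
    simp only [Finset.filter_filter, hFS]
    apply Finset.sum_congr
    · apply Finset.filter_congr; intro p _; tauto
    intro p hp
    simp only [Finset.mem_filter] at hp
    rw [w, if_pos hp.2.1.2, if_neg hp.2.2]
  have hout : ∑ p ∈ F.filter
        (fun p => p.1 ∈ S ∧ p.1 ∉ ball ℓ S z ρ ∧ p.2 ∈ S ∧ p.2 ∉ ball ℓ S z ρ),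
        c p * ℓ p.1 p.2
      = ∑ p ∈ FS.filter (fun p => ¬ min (ℓ z p.1) (ℓ z p.2) ≤ ρ), c p * w ℓ z p ρ := by
    rw [out_eq]
    apply Finset.sum_congr rfl
    intro p hp
    simp only [Finset.mem_filter] at hp
    rw [w, if_neg hp.2]
  rw [cvol, hout, hbd]
  linarith

end Aux
end RegionGrow

namespace RegionGrow
variable {V : Type*} (c : V × V → ℝ) (ℓ : V → V → ℝ) (S : Finset V) (F : Finset (V × V)) (z : V) (β : ℝ)

lemma w_nonneg (hℓnn : ∀ u v, 0 ≤ ℓ u v) (p : V × V) (ρ : ℝ) : 0 ≤ w ℓ z p ρ := by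
  unfold w
  split_ifs with h1 h2
  · exact le_rfl
  · linarith [(not_le.mp h2).le]
  · exact hℓnn _ _

lemma w_antitone (hℓsymm : ∀ u v, ℓ u v = ℓ v u) (hℓtri : ∀ u v w, ℓ u w ≤ ℓ u v + ℓ v w)
    (p : V × V) : Antitone (w ℓ z p) := by
  have hms : max (ℓ z p.1) (ℓ z p.2) - min (ℓ z p.1) (ℓ z p.2) ≤ ℓ p.1 p.2 := by
    rcases le_total (ℓ z p.1) (ℓ z p.2) with h | h
    · rw [max_eq_right h, min_eq_left h]
      have := hℓtri z p.1 p.2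
      linarith
    · rw [max_eq_left h, min_eq_right h]
      have := hℓtri z p.2 p.1
      rw [hℓsymm p.2 p.1] at this
      linarith
  have hmm : min (ℓ z p.1) (ℓ z p.2) ≤ max (ℓ z p.1) (ℓ z p.2) := min_le_max
  intro ρ₁ ρ₂ h
  unfold w
  split_ifs with h1 h2 h3 h4 h5 <;> try linarith

lemma cvol_antitone (hc : ∀ p, 0 ≤ c p) (hℓsymm : ∀ u v, ℓ u v = ℓ v u)
    (hℓtri : ∀ u v w, ℓ u w ≤ ℓ u v + ℓ v w) :
    Antitone (fun ρ => cvol c ℓ S F z β ρ) := by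
  intro ρ₁ ρ₂ h
  simp only [cvol_eq]
  gcongr with p hp
  · exact hc p
  · exact w_antitone ℓ z hℓsymm hℓtri p h

lemma cvol_ge (hc : ∀ p, 0 ≤ c p) (hℓnn : ∀ u v, 0 ≤ ℓ u v) (ρ : ℝ) :
    β ≤ cvol c ℓ S F z β ρ := by
  rw [cvol_eq]
  have : (0:ℝ) ≤ ∑ p ∈ F.filter (fun p => p.1 ∈ S ∧ p.2 ∈ S), c p * w ℓ z p ρ :=
    Finset.sum_nonneg fun p _ => mul_nonneg (hc p) (w_nonneg ℓ z hℓnn p ρ)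
  linarith

lemma cvol_locally_affine (x y : ℝ) (hT : ∀ v : V, ℓ z v ∉ Set.Ioo x y) (ρ : ℝ)
    (hρ : ρ ∈ Set.Ico x y) :
    bdry ℓ S F z ρ = bdry ℓ S F z x ∧
      cvol c ℓ S F z β ρ = cvol c ℓ S F z β x - (∑ p ∈ bdry ℓ S F z x, c p) * (ρ - x) := by
  have key : ∀ v, (ℓ z v ≤ ρ ↔ ℓ z v ≤ x) := by
    intro v
    constructor
    · intro h
      by_contra hx
      exact hT v ⟨not_le.mp hx, lt_of_le_of_lt h hρ.2⟩
    · intro h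
      exact h.trans hρ.1
  have hball : ball ℓ S z ρ = ball ℓ S z x := by
    unfold ball
    apply Finset.filter_congr
    intro v _
    rw [key v]
  have hbdry : bdry ℓ S F z ρ = bdry ℓ S F z x := by
    unfold bdry
    apply Finset.filter_congr
    intro p _
    rw [key p.1, key p.2]
  refine ⟨hbdry, ?_⟩
  rw [cvol, cvol, hball, hbdry]
  have : ∑ p ∈ bdry ℓ S F z x, c p * (max (ℓ z p.1) (ℓ z p.2) - ρ)
      = ∑ p ∈ bdry ℓ S F z x, (c p * (max (ℓ z p.1) (ℓ z p.2) - x) - c p * (ρ - x)) :=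
    Finset.sum_congr rfl fun p _ => by ring
  rw [this, Finset.sum_sub_distrib, ← Finset.sum_mul]
  ring

open MeasureTheory in
lemma partition_le (f φ : ℝ → ℝ) :
    ∀ (n : ℕ) (T : Finset ℝ), T.card ≤ n → ∀ x y : ℝ, x ≤ y →
    (∀ u v : ℝ, x ≤ u → u < v → v ≤ y → (∀ t ∈ T, t ∉ Set.Ioo u v) →
      IntervalIntegrable f volume u v ∧ (∫ ρ in u..v, f ρ) ≤ φ v - φ u) →
    IntervalIntegrable f volume x y ∧ (∫ ρ in x..y, f ρ) ≤ φ y - φ x := by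
  intro n
  induction n with
  | zero =>
    intro T hT x y hxy H
    rcases eq_or_lt_of_le hxy with rfl | hlt
    · simp
    · have hT0 : T = ∅ := Finset.card_eq_zero.mp (Nat.le_zero.mp hT)
      exact H x y le_rfl hlt le_rfl (by simp [hT0])
  | succ n ih =>
    intro T hT x y hxy H
    by_cases hex : ∃ t ∈ T, t ∈ Set.Ioo x y
    · obtain ⟨t, htT, hxt, hty⟩ := hex
      have hcard : (T.erase t).card ≤ n := by
        have := Finset.card_erase_of_mem htT
        omega
      have h1 := ih (T.erase t) hcard x t hxt.le (fun u v hu huv hv hfree =>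
        H u v hu huv (hv.trans hty.le) (fun s hs hmem => by
          rcases eq_or_ne s t with rfl | hst
          · exact absurd hmem.2 (not_lt.mpr hv)
          · exact hfree s (Finset.mem_erase.mpr ⟨hst, hs⟩) hmem))
      have h2 := ih (T.erase t) hcard t y hty.le (fun u v hu huv hv hfree =>
        H u v (hxt.le.trans hu) huv hv (fun s hs hmem => by
          rcases eq_or_ne s t with rfl | hst
          · exact absurd hmem.1 (not_lt.mpr hu)
          · exact hfree s (Finset.mem_erase.mpr ⟨hst, hs⟩) hmem))
      refine ⟨h1.1.trans h2.1, ?_⟩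
      have := intervalIntegral.integral_add_adjacent_intervals h1.1 h2.1
      linarith [h1.2, h2.2]
    · rcases eq_or_lt_of_le hxy with rfl | hlt
      · simp
      · push_neg at hex
        exact H x y le_rfl hlt le_rfl hex

lemma one_lt_eK_div (K t : ℝ) (ht : 0 < t) (htK : t ≤ K) : 1 < Real.exp 1 * K / t := by
  rw [lt_div_iff₀ ht, one_mul]
  nlinarith [Real.exp_one_gt_d9, ht.trans_le htK]

lemma lnln_le (K s t : ℝ) (hs : 0 < s) (hst : s ≤ t) (htK : t ≤ K) :
    Real.log (Real.log (Real.exp 1 * K / t)) ≤ Real.log (Real.log (Real.exp 1 * K / s)) := by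
  have ht : 0 < t := hs.trans_le hst
  have hK : 0 < K := ht.trans_le htK
  have h1 : 1 < Real.exp 1 * K / t := one_lt_eK_div K t ht htK
  have h2 : Real.exp 1 * K / t ≤ Real.exp 1 * K / s :=
    div_le_div_of_nonneg_left (mul_nonneg (Real.exp_pos 1).le hK.le) hs hst
  exact Real.log_le_log (Real.log_pos h1)
    (Real.log_le_log (div_pos (mul_pos (Real.exp_pos 1) hK) ht) h2)

open MeasureTheory in
lemma piece_le (f : ℝ → ℝ) (C K A x y : ℝ) (hC : 0 ≤ C) (hxy : x < y)
    (hK : 0 < K) (hAK : A ≤ K) (hGy : 0 < A - C * (y - x))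
    (hf : ∀ ρ ∈ Set.Ico x y, f ρ =
      C / ((A - C * (ρ - x)) * Real.log (Real.exp 1 * K / (A - C * (ρ - x))))) :
    IntervalIntegrable f volume x y ∧
      (∫ ρ in x..y, f ρ) ≤
        Real.log (Real.log (Real.exp 1 * K / (A - C * (y - x))))
          - Real.log (Real.log (Real.exp 1 * K / A)) := by
  set G : ℝ → ℝ := fun ρ => A - C * (ρ - x) with hGdef
  have hGpos : ∀ ρ ∈ Set.Icc x y, 0 < G ρ := by
    intro ρ hρ
    have : C * (ρ - x) ≤ C * (y - x) := by nlinarith [hρ.2]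
    simp only [hGdef]
    linarith
  have hGle : ∀ ρ ∈ Set.Icc x y, G ρ ≤ K := by
    intro ρ hρ
    have : 0 ≤ C * (ρ - x) := by nlinarith [hρ.1]
    simp only [hGdef]
    linarith
  have hlog_pos : ∀ ρ ∈ Set.Icc x y, 0 < Real.log (Real.exp 1 * K / G ρ) := fun ρ hρ =>
    Real.log_pos (one_lt_eK_div K (G ρ) (hGpos ρ hρ) (hGle ρ hρ))
  set ψ : ℝ → ℝ := fun ρ => Real.log (Real.log (Real.exp 1 * K / G ρ)) with hψdef
  set ψ' : ℝ → ℝ := fun ρ => C / (G ρ * Real.log (Real.exp 1 * K / G ρ)) with hψ'def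
  have huIcc : Set.uIcc x y = Set.Icc x y := Set.uIcc_of_le hxy.le
  have hGc : Continuous G := by
    simp only [hGdef]
    continuity
  have hderiv : ∀ ρ ∈ Set.uIcc x y, HasDerivAt ψ (ψ' ρ) ρ := by
    intro ρ hρ
    rw [huIcc] at hρ
    have hGρ := hGpos ρ hρ
    have hq : 0 < Real.exp 1 * K / G ρ := div_pos (by positivity) hGρ
    have hlρ := hlog_pos ρ hρ
    have hG : HasDerivAt G (-C) ρ := by
      simpa using (((hasDerivAt_id ρ).sub_const x).const_mul C).const_sub A
    have hQ : HasDerivAt (fun ρ => Real.exp 1 * K / G ρ)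
        (Real.exp 1 * K * C / (G ρ)^2) ρ := by
      have := (hasDerivAt_const ρ (Real.exp 1 * K)).div hG (ne_of_gt hGρ)
      refine this.congr_deriv ?_
      ring
    have hl1 : HasDerivAt (fun ρ => Real.log (Real.exp 1 * K / G ρ)) (C / G ρ) ρ := by
      have := (Real.hasDerivAt_log (ne_of_gt hq)).comp ρ hQ
      refine this.congr_deriv ?_
      field_simp
    have := (Real.hasDerivAt_log (ne_of_gt hlρ)).comp ρ hl1
    refine this.congr_deriv ?_
    rw [inv_mul_eq_div, div_div]
  have hcont : ContinuousOn ψ' (Set.uIcc x y) := by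
    rw [huIcc]
    apply ContinuousOn.div continuousOn_const
    · exact hGc.continuousOn.mul (ContinuousOn.log
        (ContinuousOn.div continuousOn_const hGc.continuousOn
          (fun ρ hρ => ne_of_gt (hGpos ρ hρ)))
        (fun ρ hρ => ne_of_gt (div_pos (mul_pos (Real.exp_pos 1) hK) (hGpos ρ hρ))))
    · intro ρ hρ
      exact ne_of_gt (mul_pos (hGpos ρ hρ) (hlog_pos ρ hρ))
  have hint : IntervalIntegrable ψ' volume x y := hcont.intervalIntegrable
  have heq := intervalIntegral.integral_eq_sub_of_hasDerivAt hderiv hint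
  have haey : ∀ᵐ ρ : ℝ, ρ ≠ y := by
    rw [MeasureTheory.ae_iff]
    simpa using Real.volume_singleton
  have hae' : ∀ᵐ ρ ∂(volume : Measure ℝ), ρ ∈ Set.uIoc x y → f ρ = ψ' ρ := by
    filter_upwards [haey] with ρ hρy hρ
    rw [Set.uIoc_of_le hxy.le] at hρ
    exact hf ρ ⟨hρ.1.le, lt_of_le_of_ne hρ.2 hρy⟩
  have hae : f =ᵐ[volume.restrict (Set.uIoc x y)] ψ' :=
    (MeasureTheory.ae_restrict_iff' measurableSet_uIoc).mpr hae'
  refine ⟨hint.congr_ae hae.symm, ?_⟩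
  rw [intervalIntegral.integral_congr_ae hae', heq]
  have hx : ψ x = Real.log (Real.log (Real.exp 1 * K / A)) := by
    simp [hψdef, hGdef]
  have hy : ψ y = Real.log (Real.log (Real.exp 1 * K / (A - C * (y - x)))) := rfl
  rw [hx, hy]


open MeasureTheory

/-- Region-growing lemma, complementary-volume bound:
`∫_a^b c(∂F(ρ)) / (cVol(ρ)·ln(e·cVol(a)/cVol(ρ))) dρ ≤ ln ln (e·cVol(a)/cVol(b))`. -/
theorem stmt_4 [Fintype V] (E F : Finset (V × V)) (hFE : F ⊆ E)
    (c : V × V → ℝ) (hc : ∀ p, 0 ≤ c p)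
    (ℓ : V → V → ℝ) (hℓ0 : ∀ v, ℓ v v = 0) (hℓnn : ∀ u v, 0 ≤ ℓ u v)
    (hℓsymm : ∀ u v, ℓ u v = ℓ v u)
    (hℓtri : ∀ u v w, ℓ u w ≤ ℓ u v + ℓ v w)
    (S : Finset V) (z : V) (β : ℝ) (hβ : 0 < β)
    (a b : ℝ) (ha : 0 ≤ a) (hab : a < b) :
    (∫ ρ in a..b, (∑ p ∈ bdry ℓ S F z ρ, c p) /
        (cvol c ℓ S F z β ρ * Real.log (Real.exp 1 * cvol c ℓ S F z β a / cvol c ℓ S F z β ρ))) ≤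
      Real.log (Real.log (Real.exp 1 * cvol c ℓ S F z β a / cvol c ℓ S F z β b)) := by
  have hanti : Antitone (fun ρ => cvol c ℓ S F z β ρ) :=
    cvol_antitone c ℓ S F z β hc hℓsymm hℓtri
  have hge : ∀ ρ, β ≤ cvol c ℓ S F z β ρ := cvol_ge c ℓ S F z β hc hℓnn
  have hKpos : 0 < cvol c ℓ S F z β a := hβ.trans_le (hge a)
  set T : Finset ℝ := Finset.image (fun v => ℓ z v) Finset.univ with hT
  have H : ∀ u v : ℝ, a ≤ u → u < v → v ≤ b → (∀ t ∈ T, t ∉ Set.Ioo u v) →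
      IntervalIntegrable (fun ρ => (∑ p ∈ bdry ℓ S F z ρ, c p) /
        (cvol c ℓ S F z β ρ * Real.log (Real.exp 1 * cvol c ℓ S F z β a / cvol c ℓ S F z β ρ)))
        volume u v ∧
      (∫ ρ in u..v, (∑ p ∈ bdry ℓ S F z ρ, c p) /
        (cvol c ℓ S F z β ρ * Real.log (Real.exp 1 * cvol c ℓ S F z β a / cvol c ℓ S F z β ρ)))
        ≤ Real.log (Real.log (Real.exp 1 * cvol c ℓ S F z β a / cvol c ℓ S F z β v))
          - Real.log (Real.log (Real.exp 1 * cvol c ℓ S F z β a / cvol c ℓ S F z β u)) := by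
    intro u v hau huv hvb hfree
    have hfreev : ∀ w : V, ℓ z w ∉ Set.Ioo u v := fun w =>
      hfree _ (Finset.mem_image_of_mem _ (Finset.mem_univ w))
    have haff := fun (ρ : ℝ) (hρ : ρ ∈ Set.Ico u v) =>
      cvol_locally_affine c ℓ S F z β u v hfreev ρ hρ
    have hC : 0 ≤ ∑ p ∈ bdry ℓ S F z u, c p := Finset.sum_nonneg fun p _ => hc p
    have hgu : cvol c ℓ S F z β u ≤ cvol c ℓ S F z β a := hanti hau
    have hgv : β ≤ cvol c ℓ S F z β v := hge v
    have hgvG : cvol c ℓ S F z β v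
        ≤ cvol c ℓ S F z β u - (∑ p ∈ bdry ℓ S F z u, c p) * (v - u) := by
      haveI hne : (nhdsWithin v (Set.Ioo u v)).NeBot := right_nhdsWithin_Ioo_neBot huv
      have hcontG : Filter.Tendsto
          (fun ρ => cvol c ℓ S F z β u - (∑ p ∈ bdry ℓ S F z u, c p) * (ρ - u))
          (nhdsWithin v (Set.Ioo u v))
          (nhds (cvol c ℓ S F z β u - (∑ p ∈ bdry ℓ S F z u, c p) * (v - u))) := by
        apply Filter.Tendsto.mono_left ?_ nhdsWithin_le_nhds
        exact Continuous.tendsto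
          (continuous_const.sub (continuous_const.mul (continuous_id.sub continuous_const))) v
      apply ge_of_tendsto hcontG
      filter_upwards [self_mem_nhdsWithin] with ρ hρ
      rw [← (haff ρ ⟨hρ.1.le, hρ.2⟩).2]
      exact hanti hρ.2.le
    have hGv : 0 < cvol c ℓ S F z β u - (∑ p ∈ bdry ℓ S F z u, c p) * (v - u) :=
      lt_of_lt_of_le (hβ.trans_le hgv) hgvG
    have hp := piece_le (fun ρ => (∑ p ∈ bdry ℓ S F z ρ, c p) /
        (cvol c ℓ S F z β ρ * Real.log (Real.exp 1 * cvol c ℓ S F z β a / cvol c ℓ S F z β ρ)))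
      (∑ p ∈ bdry ℓ S F z u, c p) (cvol c ℓ S F z β a) (cvol c ℓ S F z β u) u v
      hC huv hKpos hgu hGv (by
        intro ρ hρ
        rw [(haff ρ hρ).1, (haff ρ hρ).2])
    refine ⟨hp.1, hp.2.trans ?_⟩
    have h1 : Real.log (Real.log (Real.exp 1 * cvol c ℓ S F z β a /
          (cvol c ℓ S F z β u - (∑ p ∈ bdry ℓ S F z u, c p) * (v - u))))
        ≤ Real.log (Real.log (Real.exp 1 * cvol c ℓ S F z β a / cvol c ℓ S F z β v)) := by
      apply lnln_le _ _ _ (hβ.trans_le hgv) hgvG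
      have : (0:ℝ) ≤ (∑ p ∈ bdry ℓ S F z u, c p) * (v - u) :=
        mul_nonneg hC (by linarith)
      linarith
    linarith
  have hmain := partition_le (fun ρ => (∑ p ∈ bdry ℓ S F z ρ, c p) /
      (cvol c ℓ S F z β ρ * Real.log (Real.exp 1 * cvol c ℓ S F z β a / cvol c ℓ S F z β ρ)))
    (fun ρ => Real.log (Real.log (Real.exp 1 * cvol c ℓ S F z β a / cvol c ℓ S F z β ρ)))
    T.card T le_rfl a b hab.le H
  have hφa : Real.log (Real.log (Real.exp 1 * cvol c ℓ S F z β a / cvol c ℓ S F z β a)) = 0 := by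
    rw [mul_div_assoc, div_self (ne_of_gt hKpos), mul_one, Real.log_exp, Real.log_one]
  have h2 := hmain.2
  simp only [hφa, sub_zero] at h2
  exact h2

end RegionGrow
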